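/- arXiv:2502.03380 — 2 statements merged into one kernel-verified Lean document; each statement's English description precedes it below -/
import Mathlib

section
/- Let G be a group, let k be a commutative ring in which 2 is invertible, and let M be a k-linear representation of G. If some element z of the center of G acts on M as multiplication by −1 (i.e., z·m = −m for all m ∈ M), then the group homology H_n(G, M) vanishes for every n ≥ 0; in particular the coinvariants M_G = 0. -/
open scoped TensorProduct DirectSum

noncomputable section

namespace GH

variable (G : Type) [Group G] (M : Type) [AddCommGroup M] (ρ : G →* Multiplicative (AddAut M))

/-- Inhomogeneous bar chains: `C n = ⊕_{G^n} M`. -/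
abbrev C (n : ℕ) : Type := (Fin n → G) →₀ M

/-- Contraction of a tuple of group elements: multiply entries `i` and `i+1`. -/
def contract {n : ℕ} (g : Fin (n + 1) → G) (i : Fin n) : Fin n → G := fun j =>
  if (j : ℕ) < (i : ℕ) then g j.castSucc
  else if j = i then g i.castSucc * g i.succ
  else g j.succ

/-- The inhomogeneous bar differential
`d(m ⊗ [g₁|⋯|gₙ₊₁]) = g₁⁻¹·m ⊗ [g₂|⋯] + Σ (-1)ⁱ m ⊗ [⋯|gᵢgᵢ₊₁|⋯] + (-1)ⁿ⁺¹ m ⊗ [g₁|⋯|gₙ]`. -/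
def d (n : ℕ) : C G M (n + 1) →+ C G M n :=
  Finsupp.liftAddHom fun g =>
    ((Finsupp.singleAddHom (Fin.tail g)).comp (ρ (g 0)⁻¹).toAdd.toAddMonoidHom
      + (∑ i : Fin n, ((-1 : ℤ) ^ ((i : ℕ) + 1)) • Finsupp.singleAddHom (M := M) (contract G g i))
      + ((-1 : ℤ) ^ (n + 1)) • Finsupp.singleAddHom (Fin.init g) : M →+ C G M n)

/-- Cycles of the bar complex. -/
def Z : (n : ℕ) → AddSubgroup (C G M n)
  | 0 => ⊤
  | (n + 1) => (d G M ρ n).ker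

/-- Boundaries of the bar complex. -/
def B (n : ℕ) : AddSubgroup (C G M n) := (d G M ρ n).range

/-- Group homology of `G` with coefficients in `M` (via the action `ρ`):
cycles modulo boundaries of the bar complex. -/
abbrev H (n : ℕ) : Type :=
  Z G M ρ n ⧸ ((B G M ρ n).addSubgroupOf (Z G M ρ n))

/-- The chain map induced by a map of groups together with a compatible
map of coefficients. -/
def cmap {G₁ G₂ : Type} {M₁ M₂ : Type} [AddCommGroup M₁] [AddCommGroup M₂]
    (f : G₁ → G₂) (φ : M₁ →+ M₂) (n : ℕ) :
    ((Fin n → G₁) →₀ M₁) →+ ((Fin n → G₂) →₀ M₂) :=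
  Finsupp.liftAddHom fun g => (Finsupp.singleAddHom (f ∘ g)).comp φ

end GH

/-- Coinvariants `M_G = H₀(G, M)` of a group action: the quotient of `M` by the
subgroup generated by all `g·m − m`. -/
abbrev Coinv (G : Type) [Group G] (M : Type) [AddCommGroup M] (ρ : G →* Multiplicative (AddAut M)) : Type :=
  M ⧸ AddSubgroup.closure {x : M | ∃ (g : G) (m : M), x = (ρ g).toAdd m - m}

namespace SAux

open Finsupp GH

instance multAddAutCoeFun {M : Type} [AddCommGroup M] :
    CoeFun (Multiplicative (AddAut M)) (fun _ => M → M) :=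
  ⟨fun f => ⇑(Multiplicative.toAdd f)⟩

variable {G : Type} [Group G] {M : Type} [AddCommGroup M] (ρ : G →* Multiplicative (AddAut M)) (z : G)

set_option linter.unusedSectionVars false

/-- insertion of `z` at position `i` -/
def ins (z : G) : {m : ℕ} → Fin (m + 1) → (Fin m → G) → (Fin (m + 1) → G)
  | 0, _, g => Fin.cons z g
  | (_ + 1), i, g =>
    if h : i = 0 then Fin.cons z g else Fin.cons (g 0) (ins z (i.pred h) (Fin.tail g))

@[simp] lemma ins_zero {m : ℕ} (g : Fin m → G) : ins z 0 g = Fin.cons z g := by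
  cases m <;> simp [ins]

@[simp] lemma ins_succ {m : ℕ} (i : Fin (m + 1)) (g : Fin (m + 1) → G) :
    ins z i.succ g = Fin.cons (g 0) (ins z i (Fin.tail g)) := by
  rw [ins, dif_neg (Fin.succ_ne_zero i)]
  simp

@[simp] lemma contract_cons_zero {m : ℕ} (a : G) (g : Fin (m + 1) → G) :
    GH.contract G (Fin.cons a g) (0 : Fin (m + 1)) = Fin.cons (a * g 0) (Fin.tail g) := by
  funext j
  refine Fin.cases ?_ (fun k => ?_) j
  · simp [GH.contract]
  · simp [GH.contract, Fin.succ_ne_zero, Fin.cons_succ, Fin.tail]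

@[simp] lemma contract_cons_succ {m : ℕ} (a : G) (g : Fin (m + 1) → G) (i : Fin m) :
    GH.contract G (Fin.cons a g) i.succ = Fin.cons a (GH.contract G g i) := by
  funext j
  refine Fin.cases ?_ (fun k => ?_) j
  · simp [GH.contract]
  · simp only [GH.contract, Fin.cons_succ]
    rcases lt_trichotomy (k : ℕ) (i : ℕ) with h | h | h
    · rw [if_pos (by simpa using h), if_pos h, ← Fin.succ_castSucc, Fin.cons_succ]
    · have : k = i := Fin.ext h
      subst this
      rw [if_neg (by simp), if_pos rfl, if_neg (by omega), if_pos rfl,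
        ← Fin.succ_castSucc, Fin.cons_succ]
    · rw [if_neg (by simp; omega), if_neg (by simp [Fin.ext_iff]; omega),
        if_neg (by omega), if_neg (by simp [Fin.ext_iff]; omega)]

/-- prepend `a` to the tuple -/
def CA (a : G) {m : ℕ} : GH.C G M m →+ GH.C G M (m + 1) :=
  Finsupp.liftAddHom fun g => Finsupp.singleAddHom (Fin.cons a g)

/-- multiply the first entry by `a` -/
def MU (a : G) {m : ℕ} : GH.C G M (m + 1) →+ GH.C G M (m + 1) :=
  Finsupp.liftAddHom fun g => Finsupp.singleAddHom (Fin.cons (a * g 0) (Fin.tail g))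

/-- zeroth face -/
def F0 {m : ℕ} : GH.C G M (m + 1) →+ GH.C G M m :=
  Finsupp.liftAddHom fun g => (Finsupp.singleAddHom (Fin.tail g)).comp (ρ (g 0)⁻¹).toAdd.toAddMonoidHom

/-- action on coefficients -/
def TW (b : G) {m : ℕ} : GH.C G M m →+ GH.C G M m :=
  Finsupp.liftAddHom fun g => (Finsupp.singleAddHom g).comp (ρ b).toAdd.toAddMonoidHom

/-- insertion operator -/
def INS {m : ℕ} (i : Fin (m + 1)) : GH.C G M m →+ GH.C G M (m + 1) :=
  Finsupp.liftAddHom fun g => Finsupp.singleAddHom (ins z i g)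

/-- the contracting homotopy -/
def hh {m : ℕ} : GH.C G M m →+ GH.C G M (m + 1) :=
  ∑ i : Fin (m + 1), ((-1 : ℤ) ^ (i : ℕ)) • INS (M := M) z i

@[simp] lemma CA_single (a : G) {m : ℕ} (g : Fin m → G) (x : M) :
    CA (M := M) a (Finsupp.single g x) = Finsupp.single (Fin.cons a g) x := by
  simp [CA]

@[simp] lemma MU_single (a : G) {m : ℕ} (g : Fin (m + 1) → G) (x : M) :
    MU (M := M) a (Finsupp.single g x) = Finsupp.single (Fin.cons (a * g 0) (Fin.tail g)) x := by
  simp [MU]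

@[simp] lemma F0_single {m : ℕ} (g : Fin (m + 1) → G) (x : M) :
    F0 ρ (Finsupp.single g x) = Finsupp.single (Fin.tail g) (ρ (g 0)⁻¹ x) := by
  simp [F0]

@[simp] lemma TW_single (b : G) {m : ℕ} (g : Fin m → G) (x : M) :
    TW ρ b (Finsupp.single g x) = Finsupp.single g (ρ b x) := by
  simp [TW]

@[simp] lemma INS_single {m : ℕ} (i : Fin (m + 1)) (g : Fin m → G) (x : M) :
    INS (M := M) z i (Finsupp.single g x) = Finsupp.single (ins z i g) x := by
  simp [INS]

lemma hh_single {m : ℕ} (g : Fin m → G) (x : M) :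
    hh (M := M) z (Finsupp.single g x)
      = ∑ i : Fin (m + 1), ((-1 : ℤ) ^ (i : ℕ)) • Finsupp.single (ins z i g) x := by
  simp [hh, AddMonoidHom.finset_sum_apply]

lemma d_single (m : ℕ) (g : Fin (m + 1) → G) (x : M) :
    GH.d G M ρ m (Finsupp.single g x)
      = Finsupp.single (Fin.tail g) (ρ (g 0)⁻¹ x)
        + ∑ i : Fin m, ((-1 : ℤ) ^ ((i : ℕ) + 1)) • Finsupp.single (GH.contract G g i) x
        + ((-1 : ℤ) ^ (m + 1)) • Finsupp.single (Fin.init g) x := by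
  simp [GH.d, AddMonoidHom.finset_sum_apply]

end SAux
namespace SAux
variable {G : Type} [Group G] {M : Type} [AddCommGroup M] (ρ : G →* Multiplicative (AddAut M)) (z : G)
set_option linter.unusedSectionVars false

@[simp] lemma init_cons {m : ℕ} (a : G) (g : Fin (m + 1) → G) :
    Fin.init (Fin.cons (α := fun _ => G) a g) = Fin.cons a (Fin.init g) := by
  funext j
  refine Fin.cases ?_ (fun k => ?_) j
  · simp [Fin.init]
  · simp only [Fin.init, ← Fin.succ_castSucc, Fin.cons_succ]

lemma dCA (m : ℕ) (a : G) (w : GH.C G M (m + 1)) :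
    GH.d G M ρ (m + 1) (CA a w)
      = TW ρ a⁻¹ w - MU a w - CA a (GH.d G M ρ m w) + CA a (F0 ρ w) := by
  have : (GH.d G M ρ (m + 1)).comp (CA a)
      = TW ρ a⁻¹ - MU a - (CA a).comp (GH.d G M ρ m) + (CA a).comp (F0 ρ) := by
    apply Finsupp.addHom_ext
    intro g x
    simp only [AddMonoidHom.coe_comp, Function.comp_apply, AddMonoidHom.add_apply,
      AddMonoidHom.sub_apply, CA_single, d_single, TW_single, MU_single, F0_single,
      Finsupp.smul_single, Fin.tail_cons, Fin.cons_zero, init_cons, Fin.sum_univ_succ,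
      contract_cons_zero, contract_cons_succ, map_add, map_sum, map_neg, AddMonoidHom.map_zsmul, Fin.val_succ, Fin.val_zero,
      pow_succ, pow_zero, one_mul, mul_neg, mul_one, neg_smul, one_smul, neg_neg,
      Finsupp.single_neg, Finset.sum_neg_distrib]
    abel
  simpa using DFunLike.congr_fun this w

lemma hCA {m : ℕ} (a : G) (w : GH.C G M m) :
    hh (M := M) z (CA a w) = CA z (CA a w) - CA a (hh z w) := by
  have : ((hh z).comp (CA a) : GH.C G M m →+ GH.C G M (m + 2))
      = (CA z).comp (CA a) - (CA a).comp (hh z) := by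
    apply Finsupp.addHom_ext
    intro g x
    simp only [AddMonoidHom.coe_comp, Function.comp_apply, AddMonoidHom.sub_apply,
      CA_single, hh_single, Finsupp.smul_single, Fin.sum_univ_succ, ins_zero, ins_succ,
      Fin.tail_cons, Fin.cons_zero, map_add, map_sum, map_neg, AddMonoidHom.map_zsmul,
      Fin.val_succ, Fin.val_zero, pow_succ, pow_zero, one_mul, mul_neg, mul_one, neg_smul,
      one_smul, neg_neg, Finsupp.single_neg, Finset.sum_neg_distrib]
    abel
  simpa using DFunLike.congr_fun this w

lemma hTW {m : ℕ} (b : G) (w : GH.C G M m) :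
    hh (M := M) z (TW ρ b w) = TW ρ b (hh z w) := by
  have : ((hh z).comp (TW ρ b) : GH.C G M m →+ GH.C G M (m + 1))
      = (TW ρ b).comp (hh z) := by
    apply Finsupp.addHom_ext
    intro g x
    simp only [AddMonoidHom.coe_comp, Function.comp_apply, TW_single, hh_single,
      Finsupp.smul_single, map_sum, AddMonoidHom.map_zsmul, map_zsmul]
  simpa using DFunLike.congr_fun this w

lemma hMU {m : ℕ} (a : G) (w : GH.C G M (m + 1)) :
    hh (M := M) z (MU a w) = MU a (hh z w) + CA z (MU a w) - CA (a * z) w := by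
  have : ((hh z).comp (MU a) : GH.C G M (m + 1) →+ GH.C G M (m + 2))
      = (MU a).comp (hh z) + (CA z).comp (MU a) - CA (a * z) := by
    apply Finsupp.addHom_ext
    intro g x
    simp only [AddMonoidHom.coe_comp, Function.comp_apply, AddMonoidHom.add_apply,
      AddMonoidHom.sub_apply, MU_single, CA_single, hh_single, Finsupp.smul_single,
      Fin.sum_univ_succ, ins_zero, ins_succ, Fin.tail_cons, Fin.cons_zero,
      map_add, map_sum, map_neg, AddMonoidHom.map_zsmul,
      Fin.val_succ, Fin.val_zero, pow_succ, pow_zero, one_mul, mul_neg, mul_one, neg_smul,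
      one_smul, neg_neg, Finsupp.single_neg, Finset.sum_neg_distrib]
    abel
  simpa using DFunLike.congr_fun this w

lemma F0CA {m : ℕ} (a : G) (w : GH.C G M m) :
    F0 ρ (CA a w) = TW ρ a⁻¹ w := by
  have : ((F0 ρ).comp (CA a) : GH.C G M m →+ GH.C G M m) = TW ρ a⁻¹ := by
    apply Finsupp.addHom_ext
    intro g x
    simp [Fin.tail_cons]
  simpa using DFunLike.congr_fun this w

lemma MUCA {m : ℕ} (b a : G) (w : GH.C G M m) :
    MU b (CA a w) = CA (b * a) w := by
  have : ((MU b).comp (CA a) : GH.C G M m →+ GH.C G M (m + 1)) = CA (b * a) := by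
    apply Finsupp.addHom_ext
    intro g x
    simp [Fin.tail_cons]
  simpa using DFunLike.congr_fun this w

lemma TWCA {m : ℕ} (b a : G) (w : GH.C G M m) :
    TW ρ b (CA a w) = CA a (TW ρ b w) := by
  have : ((TW ρ b).comp (CA a) : GH.C G M m →+ GH.C G M (m + 1))
      = (CA a).comp (TW ρ b) := by
    apply Finsupp.addHom_ext
    intro g x
    simp
  simpa using DFunLike.congr_fun this w

lemma hh0 (w : GH.C G M 0) : hh (M := M) z w = CA z w := by
  have : (hh (M := M) z (m := 0)) = CA z := by
    apply Finsupp.addHom_ext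
    intro g x
    simp [hh_single]
  simpa using DFunLike.congr_fun this w

lemma d0CA (a : G) (w : GH.C G M 0) :
    GH.d G M ρ 0 (CA a w) = TW ρ a⁻¹ w - w := by
  have : (GH.d G M ρ 0).comp (CA a) = TW ρ a⁻¹ - AddMonoidHom.id _ := by
    apply Finsupp.addHom_ext
    intro g x
    have h0 : Fin.init (Fin.cons (α := fun _ => G) a g) = g := funext fun j => j.elim0
    simp [d_single, h0, Fin.tail_cons, sub_eq_add_neg]
  simpa using DFunLike.congr_fun this w

lemma TWz (hzinv : ∀ x : M, ρ z⁻¹ x = -x) {m : ℕ} (w : GH.C G M m) :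
    TW ρ z⁻¹ w = -w := by
  have : (TW ρ z⁻¹ : GH.C G M m →+ GH.C G M m) = -(AddMonoidHom.id _) := by
    apply Finsupp.addHom_ext
    intro g x
    simp only [TW_single, hzinv, Finsupp.single_neg, AddMonoidHom.neg_apply,
      AddMonoidHom.id_apply]
  simpa using DFunLike.congr_fun this w

lemma F0h (hzinv : ∀ x : M, ρ z⁻¹ x = -x) {m : ℕ} (w : GH.C G M (m + 1)) :
    F0 ρ (hh z w) = -w - hh z (F0 ρ w) := by
  have : ((F0 ρ).comp (hh z) : GH.C G M (m + 1) →+ GH.C G M (m + 1))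
      = -(AddMonoidHom.id _) - (hh z).comp (F0 ρ) := by
    apply Finsupp.addHom_ext
    intro g x
    simp only [AddMonoidHom.coe_comp, Function.comp_apply, AddMonoidHom.sub_apply,
      AddMonoidHom.neg_apply, AddMonoidHom.id_apply, F0_single, hh_single,
      Finsupp.smul_single, Fin.sum_univ_succ, ins_zero, ins_succ, Fin.tail_cons,
      Fin.cons_zero, map_add, map_sum, map_neg, AddMonoidHom.map_zsmul, map_zsmul, hzinv,
      Fin.val_succ, Fin.val_zero, pow_succ, pow_zero, one_mul, mul_neg, mul_one, neg_smul,
      one_smul, neg_neg, Finsupp.single_neg, Finset.sum_neg_distrib]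
    abel
  simpa using DFunLike.congr_fun this w


lemma base_key (hzc : ∀ a : G, z * a = a * z) (hzinv : ∀ x : M, ρ z⁻¹ x = -x) (a : G) (y : GH.C G M 0) :
    GH.d G M ρ (0 + 1) (hh z (CA a y)) + hh z (GH.d G M ρ 0 (CA a y)) = -(2 • CA a y) := by
  simp only [hCA, hh0, map_sub, dCA, d0CA, TWz ρ z hzinv, F0CA, MUCA, TWCA,
    map_add, map_neg, hzc]
  abel

lemma step_key (hzc : ∀ a : G, z * a = a * z) (hzinv : ∀ x : M, ρ z⁻¹ x = -x) (n : ℕ)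
    (IH : ∀ w : GH.C G M (n + 1),
      GH.d G M ρ (n + 1) (hh z w) + hh z (GH.d G M ρ n w) = -(2 • w))
    (a : G) (y : GH.C G M (n + 1)) :
    GH.d G M ρ (n + 1 + 1) (hh z (CA a y)) + hh z (GH.d G M ρ (n + 1) (CA a y))
      = -(2 • CA a y) := by
  have hIH : GH.d G M ρ (n + 1) (hh z y) = -(2 • y) - hh z (GH.d G M ρ n y) :=
    eq_sub_of_add_eq (IH y)
  simp only [hCA, map_sub, dCA, TWz ρ z hzinv, MUCA, F0CA, TWCA, hMU, hTW, hIH,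
    F0h ρ z hzinv, map_add, map_neg, AddMonoidHom.map_nsmul, hzc]
  abel

lemma key (hzc : ∀ a : G, z * a = a * z) (hzinv : ∀ x : M, ρ z⁻¹ x = -x) : ∀ (n : ℕ) (w : GH.C G M (n + 1)),
    GH.d G M ρ (n + 1) (hh z w) + hh z (GH.d G M ρ n w) = -(2 • w) := by
  intro n
  induction n with
  | zero =>
    have H : (GH.d G M ρ (0 + 1)).comp (hh z) + (hh z).comp (GH.d G M ρ 0)
        = -(2 • AddMonoidHom.id (GH.C G M (0 + 1))) := by
      apply Finsupp.addHom_ext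
      intro g x
      have hb := base_key ρ z hzc hzinv (g 0) (Finsupp.single (Fin.tail g) x)
      simp only [CA_single, Fin.cons_self_tail] at hb
      simpa using hb
    intro w
    simpa using DFunLike.congr_fun H w
  | succ n IH =>
    have H : (GH.d G M ρ (n + 1 + 1)).comp (hh z) + (hh z).comp (GH.d G M ρ (n + 1))
        = -(2 • AddMonoidHom.id (GH.C G M (n + 1 + 1))) := by
      apply Finsupp.addHom_ext
      intro g x
      have hb := step_key ρ z hzc hzinv n IH (g 0) (Finsupp.single (Fin.tail g) x)
      simp only [CA_single, Fin.cons_self_tail] at hb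
      simpa using hb
    intro w
    simpa using DFunLike.congr_fun H w


section smul
variable {k : Type} [CommRing k] [Module k M]

lemma d_smul (hlin : ∀ (g : G) (c : k) (m : M), ρ g (c • m) = c • ρ g m)
    (n : ℕ) (c : k) (w : GH.C G M (n + 1)) :
    GH.d G M ρ n (c • w) = c • GH.d G M ρ n w := by
  have hc : ∀ (e : ℤ) (v : M), e • (c • v) = c • (e • v) := fun e v => smul_comm e c v
  have : (GH.d G M ρ n).comp (DistribMulAction.toAddMonoidHom (GH.C G M (n + 1)) c)
      = (DistribMulAction.toAddMonoidHom (GH.C G M n) c).comp (GH.d G M ρ n) := by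
    apply Finsupp.addHom_ext
    intro g x
    simp only [AddMonoidHom.coe_comp, Function.comp_apply,
      DistribMulAction.toAddMonoidHom_apply, Finsupp.smul_single, d_single,
      smul_add, Finset.smul_sum, hlin, hc]
  simpa using DFunLike.congr_fun this w

lemma hh_smul (n : ℕ) (c : k) (w : GH.C G M n) :
    hh z (c • w) = c • hh z w := by
  have hc : ∀ (e : ℤ) (v : M), e • (c • v) = c • (e • v) := fun e v => smul_comm e c v
  have : (hh (M := M) z (m := n)).comp (DistribMulAction.toAddMonoidHom (GH.C G M n) c)
      = (DistribMulAction.toAddMonoidHom (GH.C G M (n + 1)) c).comp (hh z) := by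
    apply Finsupp.addHom_ext
    intro g x
    simp only [AddMonoidHom.coe_comp, Function.comp_apply,
      DistribMulAction.toAddMonoidHom_apply, Finsupp.smul_single, hh_single,
      smul_add, Finset.smul_sum, hc]
  simpa using DFunLike.congr_fun this w

end smul

end SAux

/-- If a central element `z` of `G` acts as `-1` on a `k`-linear
representation `M`, where `2` is invertible in `k`, then `Hₙ(G, M) = 0` for all `n`. -/
theorem statement2 (G : Type) [Group G] (k : Type) [CommRing k] [Invertible (2 : k)]
    (M : Type) [AddCommGroup M] [Module k M] (ρ : G →* Multiplicative (AddAut M))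
    (hlin : ∀ (g : G) (c : k) (m : M), (ρ g).toAdd (c • m) = c • (ρ g).toAdd m)
    (z : G) (hz : z ∈ Subgroup.center G) (hzm : ∀ m : M, (ρ z).toAdd m = -m) :
    ∀ n : ℕ, Subsingleton (GH.H G M ρ n) := by
  have hzc : ∀ a : G, z * a = a * z := fun a => (Subgroup.mem_center_iff.mp hz a).symm
  have hzinv : ∀ x : M, ρ z⁻¹ x = -x := by
    intro x
    have h1 : ρ z (ρ z⁻¹ x) = x := by
      rw [← AddAut.add_apply, ← toAdd_mul, ← map_mul, mul_inv_cancel, map_one, toAdd_one]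
      rfl
    have h2 := hzm (ρ z⁻¹ x)
    rw [h1] at h2
    have := congrArg (fun t => -t) h2
    simpa using this.symm
  have hhalf : (⅟2 : k) + ⅟2 = 1 := by rw [← two_mul, mul_invOf_self]
  have hdouble : ∀ (n : ℕ) (w : GH.C G M n), (-(⅟2 : k)) • (-(2 • w)) = w := by
    intro n w
    rw [smul_neg, neg_smul, neg_neg, two_smul, smul_add, ← add_smul, hhalf, one_smul]
  -- every cycle is a boundary
  have hB : ∀ (n : ℕ) (w : GH.C G M n), w ∈ GH.Z G M ρ n → w ∈ GH.B G M ρ n := by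
    intro n
    match n with
    | 0 =>
      intro w _
      refine ⟨SAux.CA z ((-(⅟2 : k)) • w), ?_⟩
      rw [SAux.d0CA, SAux.TWz ρ z hzinv]
      rw [neg_smul, neg_neg, sub_neg_eq_add, ← add_smul, hhalf, one_smul]
    | (n + 1) =>
      intro w hw
      have hw0 : GH.d G M ρ n w = 0 := hw
      have hk := SAux.key ρ z hzc hzinv n w
      rw [hw0, map_zero, add_zero] at hk
      refine ⟨(-(⅟2 : k)) • SAux.hh z w, ?_⟩
      rw [SAux.d_smul ρ hlin, hk, hdouble]
  intro n
  constructor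
  intro u v
  refine QuotientAddGroup.induction_on u fun a => QuotientAddGroup.induction_on v fun b => ?_
  rw [QuotientAddGroup.eq]
  exact AddSubgroup.mem_addSubgroupOf.mpr (hB n _ (-a + b).2)

end
end

section
/- There exists a surjective group homomorphism φ: ℝ ⊗_ℤ (ℝ/ℤ) → Ω¹_ℝ such that for every ℓ ∈ ℝ and every t ∈ ℝ with sin(πt) ≠ 0, φ(ℓ ⊗ [t]) = ℓ · (sin(πt))⁻¹ · d(cos(πt)), where [t] denotes the class of t in ℝ/ℤ. (In particular this formula is well defined: it is additive in t, depends only on t modulo ℤ, and extends additively to all of ℝ ⊗_ℤ ℝ/ℤ.) -/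
open scoped TensorProduct DirectSum

noncomputable section

open Real

local notation "Ω" => KaehlerDifferential ℤ ℝ
local notation "dd" => KaehlerDifferential.D ℤ ℝ

lemma pyth (x : ℝ) : Real.sin x • dd (Real.sin x) + Real.cos x • dd (Real.cos x) = 0 := by
  have h := congrArg dd (Real.sin_sq_add_cos_sq x)
  rw [map_add, Derivation.map_one_eq_zero] at h
  simp only [sq] at h
  rw [Derivation.leibniz, Derivation.leibniz] at h
  have h2 : (2:ℝ) • (Real.sin x • dd (Real.sin x) + Real.cos x • dd (Real.cos x)) = 0 := by
    rw [smul_add]; rw [show ((2:ℝ) • (Real.sin x • dd (Real.sin x)) = Real.sin x • dd (Real.sin x) + Real.sin x • dd (Real.sin x)) from two_smul ℝ _, show ((2:ℝ) • (Real.cos x • dd (Real.cos x)) = Real.cos x • dd (Real.cos x) + Real.cos x • dd (Real.cos x)) from two_smul ℝ _]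
    linear_combination (norm := abel) h
  have := congrArg (fun z => ((2:ℝ))⁻¹ • z) h2
  simpa [smul_smul] using this

lemma dd_pm (ε x : ℝ) (hε : ε = 1 ∨ ε = -1) : dd (ε * x) = ε • dd x := by
  rcases hε with h | h <;> subst h <;> simp

lemma cos_pm {x : ℝ} (h : Real.sin x = 0) : Real.cos x = 1 ∨ Real.cos x = -1 := by
  have h1 : Real.cos x * Real.cos x = 1 := by nlinarith [Real.sin_sq_add_cos_sq x]
  exact mul_self_eq_one_iff.mp h1

def gfun (t : ℝ) : KaehlerDifferential ℤ ℝ :=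
  (Real.sin (Real.pi * t))⁻¹ • dd (Real.cos (Real.pi * t))

lemma gfun_of_sin_eq_zero {t : ℝ} (h : Real.sin (Real.pi * t) = 0) : gfun t = 0 := by
  simp [gfun, h]

lemma key_alg (ca sa cb sb : ℝ) (hsa : sa ≠ 0) (hsb : sb ≠ 0) (hs : sa*cb + ca*sb ≠ 0)
    (h1 : sa • dd sa + ca • dd ca = 0) (h2 : sb • dd sb + cb • dd cb = 0) :
    (sa*cb + ca*sb)⁻¹ • dd (ca*cb - sa*sb) = sa⁻¹ • dd ca + sb⁻¹ • dd cb := by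
  have key : (sa*sb) • dd (ca*cb - sa*sb)
      = ((sa*cb+ca*sb)*sb) • dd ca + ((sa*cb+ca*sb)*sa) • dd cb := by
    rw [map_sub, Derivation.leibniz, Derivation.leibniz]
    linear_combination (norm := module) (-(sb*sb)) • h1 + (-(sa*sa)) • h2
  set s := sa*cb + ca*sb with hsdef
  have e1 : (sa*sb*s)⁻¹ * (sa*sb) = s⁻¹ := by field_simp
  have e2 : (sa*sb*s)⁻¹ * (s*sb) = sa⁻¹ := by field_simp
  have e3 : (sa*sb*s)⁻¹ * (s*sa) = sb⁻¹ := by field_simp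
  calc s⁻¹ • dd (ca*cb - sa*sb) = ((sa*sb*s)⁻¹ * (sa*sb)) • dd (ca*cb - sa*sb) := by rw [e1]
    _ = (sa*sb*s)⁻¹ • ((sa*sb) • dd (ca*cb - sa*sb)) := by rw [smul_smul]
    _ = (sa*sb*s)⁻¹ • ((s*sb) • dd ca + (s*sa) • dd cb) := by rw [key]
    _ = sa⁻¹ • dd ca + sb⁻¹ • dd cb := by
        rw [smul_add, smul_smul, smul_smul, e2, e3]

lemma g2 (x y : ℝ) :
    (Real.sin (x+y))⁻¹ • dd (Real.cos (x+y))
      = (Real.sin x)⁻¹ • dd (Real.cos x) + (Real.sin y)⁻¹ • dd (Real.cos y) := by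
  by_cases hx : Real.sin x = 0
  · rcases cos_pm hx with h | h <;>
      simp [Real.cos_add, Real.sin_add, hx, h, map_neg, inv_neg, neg_smul, neg_neg]
  by_cases hy : Real.sin y = 0
  · rcases cos_pm hy with h | h <;>
      simp [Real.cos_add, Real.sin_add, hy, h, map_neg, inv_neg, neg_smul, neg_neg]
  by_cases hs : Real.sin (x+y) = 0
  · have hcy : Real.cos y = Real.cos (x+y) * Real.cos x := by
      have h0 := Real.cos_sub (x+y) x
      rw [hs] at h0
      have h2 : x + y - x = y := by ring
      rw [h2] at h0
      linarith
    have hsy : Real.sin y = -(Real.cos (x+y) * Real.sin x) := by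
      have := Real.sin_sub (x+y) x
      rw [hs] at this
      have h2 : x + y - x = y := by ring
      rw [h2] at this
      linarith [this]
    rcases cos_pm hs with h | h <;>
      simp [hs, hcy, hsy, h, map_neg, neg_smul, smul_neg, inv_neg, neg_neg]
  · rw [Real.cos_add, Real.sin_add]
    exact key_alg _ _ _ _ hx hy (by rwa [Real.sin_add] at hs) (pyth x) (pyth y)

lemma gfun_add (a b : ℝ) : gfun (a + b) = gfun a + gfun b := by
  unfold gfun
  rw [mul_add]
  exact g2 _ _

def ghom : ℝ →+ KaehlerDifferential ℤ ℝ := AddMonoidHom.mk' gfun gfun_add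

lemma ghom_zmult : ∀ x ∈ AddSubgroup.zmultiples (1:ℝ), ghom x = 0 := by
  intro x hx
  obtain ⟨k, hk⟩ := AddSubgroup.mem_zmultiples_iff.mp hx
  subst hk
  rw [map_zsmul]
  have : ghom (1:ℝ) = 0 := by
    show gfun 1 = 0
    apply gfun_of_sin_eq_zero
    simp [Real.sin_pi]
  rw [this, smul_zero]

def gbar : AddCircle (1:ℝ) →+ KaehlerDifferential ℤ ℝ :=
  QuotientAddGroup.lift _ ghom ghom_zmult

lemma gbar_coe (t : ℝ) : gbar (t : AddCircle (1:ℝ)) = gfun t := rfl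

def bil : ℝ →ₗ[ℤ] AddCircle (1:ℝ) →ₗ[ℤ] KaehlerDifferential ℤ ℝ :=
  LinearMap.mk₂ ℤ (fun ℓ θ => ℓ • gbar θ)
    (fun m n θ => by rw [add_smul])
    (fun c m θ => by rw [smul_assoc])
    (fun ℓ m n => by rw [map_add, smul_add])
    (fun c ℓ θ => by rw [map_zsmul, smul_comm])

def φ0 : (ℝ ⊗[ℤ] AddCircle (1 : ℝ)) →+ KaehlerDifferential ℤ ℝ :=
  (TensorProduct.lift bil).toAddMonoidHom

lemma φ0_tmul (ℓ : ℝ) (θ : AddCircle (1:ℝ)) : φ0 (ℓ ⊗ₜ[ℤ] θ) = ℓ • gbar θ := by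
  simp [φ0, bil]

lemma mem_small (a : ℝ) {r : ℝ} (hr : |r| < 1) : a • dd r ∈ φ0.range := by
  obtain ⟨hr1, hr2⟩ := abs_lt.mp hr
  set t := Real.arccos r / Real.pi with ht
  have hπ : Real.pi ≠ 0 := Real.pi_ne_zero
  have hpt : Real.pi * t = Real.arccos r := by rw [ht]; field_simp
  have hcos : Real.cos (Real.pi * t) = r := by rw [hpt]; exact Real.cos_arccos (by linarith) (by linarith)
  have hsin : Real.sin (Real.pi * t) = Real.sqrt (1 - r^2) := by rw [hpt, Real.sin_arccos]
  have hs : Real.sin (Real.pi * t) ≠ 0 := by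
    rw [hsin]
    have : (0:ℝ) < 1 - r^2 := by nlinarith
    positivity
  refine ⟨(a * Real.sin (Real.pi * t)) ⊗ₜ[ℤ] ((t : AddCircle (1:ℝ))), ?_⟩
  rw [φ0_tmul, gbar_coe]
  unfold gfun
  rw [smul_smul, mul_assoc, mul_inv_cancel₀ hs, mul_one, hcos]

lemma mem_all (a r : ℝ) : a • dd r ∈ φ0.range := by
  set n : ℕ := ⌈|r|⌉₊ + 1 with hn
  have hn0 : (0:ℝ) < (n:ℝ) := by positivity
  have hrn : |r / (n:ℝ)| < 1 := by
    rw [abs_div, abs_of_pos hn0, div_lt_one hn0]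
    calc |r| ≤ ⌈|r|⌉₊ := Nat.le_ceil _
    _ < (n:ℝ) := by rw [hn]; push_cast; linarith
  have hsplit : r = (n:ℝ) * (r / (n:ℝ)) := by field_simp
  have hd : dd r = (n:ℝ) • dd (r / (n:ℝ)) := by
    conv_lhs => rw [hsplit]
    rw [Derivation.leibniz, Derivation.map_natCast, smul_zero, add_zero]
  rw [hd, smul_smul]
  exact mem_small _ hrn

lemma φ0_surj : Function.Surjective φ0 := by
  intro x
  have hx : x ∈ Submodule.span ℝ (Set.range (KaehlerDifferential.D ℤ ℝ)) := by
    rw [KaehlerDifferential.span_range_derivation]; trivial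
  have key : ∀ a : ℝ, a • x ∈ φ0.range := by
    induction hx using Submodule.span_induction with
    | mem y hy =>
        obtain ⟨r, rfl⟩ := hy
        exact fun a => mem_all a r
    | zero => intro a; rw [smul_zero]; exact zero_mem _
    | add y z hy hz ihy ihz => intro a; rw [smul_add]; exact add_mem (ihy a) (ihz a)
    | smul c y hy ih => intro a; rw [smul_smul]; exact ih (a * c)
  have := key 1
  rw [one_smul] at this
  exact this


/-- There is a surjective group homomorphism
`φ : ℝ ⊗_ℤ ℝ/ℤ → Ω¹_ℝ` with `φ(ℓ ⊗ [t]) = ℓ · (sin πt)⁻¹ · d(cos πt)`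
whenever `sin πt ≠ 0`. -/
theorem statement11 :
    ∃ φ : (ℝ ⊗[ℤ] AddCircle (1 : ℝ)) →+ KaehlerDifferential ℤ ℝ,
      Function.Surjective φ ∧
      ∀ (ℓ t : ℝ), Real.sin (Real.pi * t) ≠ 0 →
        φ (ℓ ⊗ₜ[ℤ] (t : AddCircle (1 : ℝ)))
          = (ℓ * (Real.sin (Real.pi * t))⁻¹) •
              (KaehlerDifferential.D ℤ ℝ (Real.cos (Real.pi * t))) := by
  refine ⟨φ0, φ0_surj, ?_⟩
  intro ℓ t _
  rw [φ0_tmul, gbar_coe]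
  unfold gfun
  rw [smul_smul]

end
end
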